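/- For every C ∈ ℝ, the function u(x) = -x²/(C + x⁵/20 + x·ln(∫ -x e^{-(C/x + x⁴/20)} dx)), on any interval where it is defined, satisfies the second-order ODE u'' = 2(u')²/u + (x e^{x/u} - 4/x) u' - (3u²/x + u) e^{x/u} + x u² + 2u/x². -/

import Mathlib

/-- `u(x) = -x²/(C + x⁵/20 + x·ln F(x))` where `F` is an antiderivative of
`-x e^{-(C/x + x⁴/20)}`. -/
noncomputable def uEx5 (C : ℝ) (F : ℝ → ℝ) : ℝ → ℝ := fun x =>
  -x ^ 2 / (C + x ^ 5 / 20 + x * Real.log (F x))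

/-- Explicit formula for the first derivative of `uEx5`. -/
noncomputable def gEx5 (C : ℝ) (F : ℝ → ℝ) : ℝ → ℝ := fun y =>
  (-2 * y * (C + y ^ 5 / 20 + y * Real.log (F y)) +
      y ^ 2 * (y ^ 4 / 4 + Real.log (F y)
        - y ^ 2 * Real.exp (-(C / y + y ^ 4 / 20)) / F y)) /
    (C + y ^ 5 / 20 + y * Real.log (F y)) ^ 2

theorem hasDerivAt_uEx5 (C : ℝ) (F : ℝ → ℝ) (y : ℝ)
    (hF : HasDerivAt F (-y * Real.exp (-(C / y + y ^ 4 / 20))) y)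
    (hy : y > 0) (hFpos : F y > 0)
    (hden : C + y ^ 5 / 20 + y * Real.log (F y) ≠ 0) :
    HasDerivAt (uEx5 C F) (gEx5 C F y) y := by
  have hy0 : y ≠ 0 := ne_of_gt hy
  have hFy : F y ≠ 0 := ne_of_gt hFpos
  have hlog : HasDerivAt (fun z => Real.log (F z))
      (-y * Real.exp (-(C / y + y ^ 4 / 20)) / F y) y := hF.log hFy
  have hden' : HasDerivAt (fun z => C + z ^ 5 / 20 + z * Real.log (F z))
      (5 * y ^ 4 / 20 + (1 * Real.log (F y) +
        y * (-y * Real.exp (-(C / y + y ^ 4 / 20)) / F y))) y := by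
    exact ((((hasDerivAt_pow 5 y).div_const 20).const_add C).add
      ((hasDerivAt_id y).mul hlog))
  have hnum : HasDerivAt (fun z : ℝ => -z ^ 2) (-(2 * y)) y := by
    simpa using (hasDerivAt_pow 2 y).fun_neg
  have h := hnum.fun_div hden' hden
  have : uEx5 C F = fun z => -z ^ 2 / (C + z ^ 5 / 20 + z * Real.log (F z)) := rfl
  rw [this]
  refine h.congr_deriv (Eq.symm ?_)
  unfold gEx5
  set Ey := Real.exp (-(C / y + y ^ 4 / 20)) with hEy
  set L := Real.log (F y) with hL
  set Fy := F y with hFy2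
  rw [div_eq_div_iff (pow_ne_zero 2 hden) (pow_ne_zero 2 hden)]
  field_simp
  ring

set_option maxHeartbeats 2000000 in
theorem stmt_13 (C : ℝ) (F : ℝ → ℝ) (s : Set ℝ) (hs : IsOpen s)
    (hF : ∀ x ∈ s, HasDerivAt F (-x * Real.exp (-(C / x + x ^ 4 / 20))) x)
    (hx : ∀ x ∈ s, x > 0)
    (hFpos : ∀ x ∈ s, F x > 0)
    (hden : ∀ x ∈ s, C + x ^ 5 / 20 + x * Real.log (F x) ≠ 0) :
    ∀ x ∈ s, deriv (deriv (uEx5 C F)) x =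
      2 * (deriv (uEx5 C F) x) ^ 2 / uEx5 C F x +
        (x * Real.exp (x / uEx5 C F x) - 4 / x) * deriv (uEx5 C F) x -
        (3 * (uEx5 C F x) ^ 2 / x + uEx5 C F x) * Real.exp (x / uEx5 C F x) +
        x * (uEx5 C F x) ^ 2 + 2 * uEx5 C F x / x ^ 2 := by
  intro x hxs
  have hx0 : x ≠ 0 := ne_of_gt (hx x hxs)
  have hFx : F x ≠ 0 := ne_of_gt (hFpos x hxs)
  have hdx : C + x ^ 5 / 20 + x * Real.log (F x) ≠ 0 := hden x hxs
  -- first derivative everywhere on s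
  have key : ∀ y ∈ s, HasDerivAt (uEx5 C F) (gEx5 C F y) y := fun y hy =>
    hasDerivAt_uEx5 C F y (hF y hy) (hx y hy) (hFpos y hy) (hden y hy)
  have hev : deriv (uEx5 C F) =ᶠ[nhds x] gEx5 C F :=
    Filter.eventually_of_mem (hs.mem_nhds hxs) (fun y hy => (key y hy).deriv)
  -- second derivative: differentiate gEx5 at x
  set E : ℝ := Real.exp (-(C / x + x ^ 4 / 20)) with hE
  have hEx : HasDerivAt (fun z => Real.exp (-(C / z + z ^ 4 / 20)))
      (E * -(C * -(x ^ 2)⁻¹ + 4 * x ^ 3 / 20)) x := by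
    have hinner : HasDerivAt (fun z : ℝ => -(C / z + z ^ 4 / 20))
        (-(C * -(x ^ 2)⁻¹ + 4 * x ^ 3 / 20)) x := by
      have h1 : HasDerivAt (fun z : ℝ => C / z) (C * -(x ^ 2)⁻¹) x := by
        simpa [div_eq_mul_inv] using (hasDerivAt_inv hx0).const_mul C
      exact (h1.add ((hasDerivAt_pow 4 x).div_const 20)).neg
    simpa [hE, mul_comm] using hinner.exp
  have hlog : HasDerivAt (fun z => Real.log (F z)) (-x * E / F x) x := by
    simpa [hE] using (hF x hxs).log hFx
  have hDen : HasDerivAt (fun z => C + z ^ 5 / 20 + z * Real.log (F z))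
      (5 * x ^ 4 / 20 + (1 * Real.log (F x) + x * (-x * E / F x))) x :=
    (((hasDerivAt_pow 5 x).div_const 20).const_add C).add
      ((hasDerivAt_id x).mul hlog)
  -- derivative of the "den'" part: z^4/4 + log(F z) - z^2*Exp/F
  have hQuot : HasDerivAt (fun z => z ^ 2 * Real.exp (-(C / z + z ^ 4 / 20)) / F z)
      (((2 * x ^ 1 * E + x ^ 2 * (E * -(C * -(x ^ 2)⁻¹ + 4 * x ^ 3 / 20))) * F x -
        x ^ 2 * E * (-x * E)) / F x ^ 2) x := by
    have := ((hasDerivAt_pow 2 x).fun_mul hEx).fun_div (hF x hxs) hFx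
    simpa [hE] using this
  have hDp : HasDerivAt (fun z => z ^ 4 / 4 + Real.log (F z)
      - z ^ 2 * Real.exp (-(C / z + z ^ 4 / 20)) / F z)
      ((4 * x ^ 3 / 4 + -x * E / F x) -
       ((2 * x ^ 1 * E + x ^ 2 * (E * -(C * -(x ^ 2)⁻¹ + 4 * x ^ 3 / 20))) * F x -
        x ^ 2 * E * (-x * E)) / F x ^ 2) x :=
    (((hasDerivAt_pow 4 x).div_const 4).add hlog).sub hQuot
  -- numerator of gEx5
  set D1 : ℝ := 5 * x ^ 4 / 20 + (1 * Real.log (F x) + x * (-x * E / F x)) with hD1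
  set D2 : ℝ := (4 * x ^ 3 / 4 + -x * E / F x) -
       ((2 * x ^ 1 * E + x ^ 2 * (E * -(C * -(x ^ 2)⁻¹ + 4 * x ^ 3 / 20))) * F x -
        x ^ 2 * E * (-x * E)) / F x ^ 2 with hD2
  set Dx : ℝ := C + x ^ 5 / 20 + x * Real.log (F x) with hDx2
  set Px : ℝ := x ^ 4 / 4 + Real.log (F x) - x ^ 2 * E / F x with hPx
  have hNum : HasDerivAt (fun z => -2 * z * (C + z ^ 5 / 20 + z * Real.log (F z)) +
      z ^ 2 * (z ^ 4 / 4 + Real.log (F z)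
        - z ^ 2 * Real.exp (-(C / z + z ^ 4 / 20)) / F z))
      ((-2 * 1 * Dx + -2 * x * D1) + (2 * x ^ 1 * Px + x ^ 2 * D2)) x := by
    have h1 : HasDerivAt (fun z : ℝ => -2 * z) (-2 * 1 : ℝ) x :=
      (hasDerivAt_id x).const_mul (-2)
    exact (h1.mul hDen).add ((hasDerivAt_pow 2 x).mul hDp)
  have hDenSq : HasDerivAt (fun z => (C + z ^ 5 / 20 + z * Real.log (F z)) ^ 2)
      (2 * Dx ^ 1 * D1) x := by
    simpa using hDen.fun_pow 2
  have hDenSqNe : Dx ^ 2 ≠ 0 := pow_ne_zero 2 hdx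
  have hg : HasDerivAt (gEx5 C F)
      ((((-2 * 1 * Dx + -2 * x * D1) + (2 * x ^ 1 * Px + x ^ 2 * D2)) * Dx ^ 2 -
        (-2 * x * Dx + x ^ 2 * Px) * (2 * Dx ^ 1 * D1)) / (Dx ^ 2) ^ 2) x := by
    have := hNum.div hDenSq hDenSqNe
    exact this
  -- rewrite goal
  rw [Filter.EventuallyEq.deriv_eq hev, hg.deriv, (key x hxs).deriv]
  have hux : uEx5 C F x = -x ^ 2 / Dx := rfl
  have hexp : Real.exp (x / uEx5 C F x) = E / F x := by
    have h1 : x / uEx5 C F x = -(C / x + x ^ 4 / 20) - Real.log (F x) := by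
      rw [hux]
      field_simp [hDx2]
      ring
    rw [h1, Real.exp_sub, Real.exp_log (hFpos x hxs), hE]
  rw [hexp, hux]
  have hg5 : gEx5 C F x = (-2 * x * Dx + x ^ 2 * Px) / Dx ^ 2 := rfl
  rw [hg5]
  set L := Real.log (F x) with hL
  set Fv := F x with hFv
  have hC : C = Dx - x ^ 5 / 20 - x * L := by rw [hDx2]; ring
  rw [hPx, hD1, hD2, hC]
  field_simp
  ring
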